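/- If < is a discrete right-order on a group G with least positive element a, then for every g ∈ G with 1 < g, both a·g·a⁻¹ and a⁻¹·g·a are positive (greater than 1). -/

import Mathlib

variable {G : Type*} [Group G]

/-- A right order on a group: a strict total order invariant under right multiplication. -/
def IsRightOrder (r : G → G → Prop) : Prop :=
  IsStrictTotalOrder G r ∧ ∀ f g h : G, r f g → r (f * h) (g * h)

/-- `a` is the least element greater than the identity for the order `r`. -/
def LeastPos (r : G → G → Prop) (a : G) : Prop :=
  r 1 a ∧ ∀ g : G, r 1 g → g = a ∨ r a g

theorem stmt9 (r : G → G → Prop) (hr : IsRightOrder r) (a : G) (ha : LeastPos r a)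
    (g : G) (hg : r 1 g) :
    r 1 (a * g * a⁻¹) ∧ r 1 (a⁻¹ * g * a) := by
  obtain ⟨hsto, hmul⟩ := hr
  have htri : ∀ x y : G, r x y ∨ x = y ∨ r y x := @trichotomous_of G r hsto.toTrichotomous
  have hirr : ∀ x : G, ¬ r x x := hsto.toIsStrictOrder.toIrrefl.irrefl
  have htr : ∀ x y z : G, r x y → r y z → r x z :=
    fun x y z => hsto.toIsStrictOrder.toIsTrans.trans x y z
  obtain ⟨h1a, hleast⟩ := ha
  have ha1 : r a⁻¹ 1 := by
    have := hmul 1 a a⁻¹ h1a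
    simpa using this
  constructor
  · -- a * g * a⁻¹ > 1
    rcases hleast g hg with hga | hag
    · subst hga; simpa using h1a
    · have h1 : r 1 (g * a⁻¹) := by
        have := hmul a g a⁻¹ hag
        simpa using this
      have h2 : r (g * a⁻¹) (a * (g * a⁻¹)) := by
        have := hmul 1 a (g * a⁻¹) h1a
        simpa using this
      have := htr _ _ _ h1 h2
      simpa [mul_assoc] using this
  · -- a⁻¹ * g * a > 1
    rcases htri 1 (a⁻¹ * g * a) with h | h | h
    · exact h
    · exfalso
      have hg1 : g = 1 := by
        have : a * (a⁻¹ * g * a) * a⁻¹ = a * 1 * a⁻¹ := by rw [← h]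
        group at this
        simpa using this
      rw [hg1] at hg
      exact hirr 1 hg
    · exfalso
      -- x = a⁻¹ g a < 1, so x⁻¹ = a⁻¹ g⁻¹ a > 1
      have hx : r 1 (a⁻¹ * g⁻¹ * a) := by
        have := hmul (a⁻¹ * g * a) 1 (a⁻¹ * g⁻¹ * a) h
        have e1 : a⁻¹ * g * a * (a⁻¹ * g⁻¹ * a) = 1 := by group
        rw [e1, one_mul] at this
        exact this
      rcases hleast _ hx with he | hlt
      · -- a⁻¹ g⁻¹ a = a ⇒ g = a⁻¹
        have hg' : g = a⁻¹ := by
          have : a * (a⁻¹ * g⁻¹ * a) * a⁻¹ = a * a * a⁻¹ := by rw [he]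
          group at this
          have : g⁻¹ = a := by simpa using this
          rw [← this]; group
        rw [hg'] at hg
        exact hirr _ (htr _ _ _ hg ha1)
      · -- a < a⁻¹ g⁻¹ a ⇒ 1 < a⁻¹ g⁻¹ ⇒ g < a⁻¹ ⇒ 1 < a⁻¹, contra
        have h1 : r 1 (a⁻¹ * g⁻¹) := by
          have := hmul a (a⁻¹ * g⁻¹ * a) a⁻¹ hlt
          simpa [mul_assoc] using this
        have h2 : r g a⁻¹ := by
          have := hmul 1 (a⁻¹ * g⁻¹) g h1
          simpa [mul_assoc] using this
        exact hirr _ (htr _ _ _ (htr _ _ _ hg h2) ha1)
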